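/- arXiv:1208.6581 — 2 statements merged into one kernel-verified Lean document; each statement's English description precedes it below -/
import Mathlib

section
/- For Φ ∈ (0, 2π/3], the clustering coefficient of the circle model with uniform window satisfies ⟨C⟩ = (p/(πΦ²))·[Φ³ + 2∑_{n=1}^{∞} sin³(nΦ)/n³] = 3p/4. That is, the sum Φ³ + 2∑_{n=1}^{∞} sin³(nΦ)/n³ equals (3/4)πΦ² for all Φ in this range. -/
open Real

lemma sinSum (θ : ℝ) (h0 : 0 ≤ θ) (h2 : θ ≤ 2*π) :
    HasSum (fun n : ℕ => Real.sin (((n:ℝ)+1)*θ)/((n:ℝ)+1)^3)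
      (π^2*θ/6 - π*θ^2/4 + θ^3/12) := by
  have hπ : (0:ℝ) < π := Real.pi_pos
  set x : ℝ := θ/(2*π) with hx
  have hx01 : x ∈ Set.Icc (0:ℝ) 1 := by
    constructor
    · positivity
    · rw [hx, div_le_one (by positivity)]; linarith
  have h := hasSum_one_div_nat_pow_mul_sin (k := 1) one_ne_zero hx01
  have hb : ∀ y : ℝ, (Polynomial.map (algebraMap ℚ ℝ) (Polynomial.bernoulli (2*1+1))).eval y
      = y^3 - 3/2*y^2 + 1/2*y := by
    intro y
    norm_num
    simp [Polynomial.bernoulli, Finset.sum_range_succ, bernoulli_one, Polynomial.eval_monomial]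
    norm_num [bernoulli, bernoulli'_three]
    ring
  rw [hb] at h
  have hθ : 2 * π * x = θ := by
    rw [hx]; field_simp
  have h' := (hasSum_nat_add_iff' (f := fun n : ℕ => 1 / (n : ℝ) ^ (2*1+1) * Real.sin (2 * π * n * x)) 1).mpr h
  simp only [Finset.range_one, Finset.sum_singleton, Nat.cast_zero] at h'
  norm_num at h'
  have hfun : (fun n : ℕ => Real.sin (((n:ℝ)+1)*θ)/((n:ℝ)+1)^3)
      = fun n : ℕ => 1 / ((n:ℝ)+1) ^ 3 * Real.sin (2 * π * ((n:ℕ)+1) * x) := by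
    funext n
    rw [mul_comm (2*π) ((n:ℝ)+1), mul_assoc, hθ]
    ring
  rw [hfun]
  simp only [one_div]
  convert h' using 1
  · rfl
  rw [← hθ]
  norm_num [Nat.factorial]
  ring

/-- For `Φ ∈ (0, 2π/3]`, `Φ³ + 2∑_{n≥1} sin³(nΦ)/n³ = (3/4)πΦ²`, hence the
clustering coefficient equals `3p/4`. -/
theorem clustering_coefficient_three_quarters
    (p Φ : ℝ) (hp0 : 0 ≤ p) (hp1 : p ≤ 1) (hΦ0 : 0 < Φ) (hΦ : Φ ≤ 2 * π / 3) :
    Φ ^ 3 + 2 * ∑' n : ℕ, Real.sin ((n + 1) * Φ) ^ 3 / ((n : ℝ) + 1) ^ 3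
        = (3 / 4) * π * Φ ^ 2 ∧
    (p / (π * Φ ^ 2)) *
        (Φ ^ 3 + 2 * ∑' n : ℕ, Real.sin ((n + 1) * Φ) ^ 3 / ((n : ℝ) + 1) ^ 3)
      = 3 * p / 4 := by
  have hπ : (0:ℝ) < π := Real.pi_pos
  have h1 := sinSum Φ hΦ0.le (by linarith)
  have h2 := sinSum (3*Φ) (by linarith) (by linarith)
  have h3 : HasSum (fun n : ℕ => Real.sin (((n:ℝ) + 1) * Φ) ^ 3 / ((n : ℝ) + 1) ^ 3)
      ((3 * (π^2*Φ/6 - π*Φ^2/4 + Φ^3/12) - (π^2*(3*Φ)/6 - π*(3*Φ)^2/4 + (3*Φ)^3/12)) / 4) := by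
    have key : ∀ n : ℕ, Real.sin (((n:ℝ)+1)*Φ)^3
        = (3 * Real.sin (((n:ℝ)+1)*Φ) - Real.sin (((n:ℝ)+1)*(3*Φ)))/4 := by
      intro n
      have h := Real.sin_three_mul (((n:ℝ)+1) * Φ)
      rw [show 3 * (((n:ℝ)+1) * Φ) = ((n:ℝ)+1) * (3*Φ) by ring] at h
      linarith
    have H := ((h1.mul_left 3).sub h2).div_const 4
    convert H using 2 with n
    · rfl
    rw [key n]
    ring
  have htsum : ∑' n : ℕ, Real.sin (((n:ℝ) + 1) * Φ) ^ 3 / ((n : ℝ) + 1) ^ 3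
      = (3/8)*π*Φ^2 - Φ^3/2 := by
    rw [h3.tsum_eq]; ring
  constructor
  · rw [htsum]; ring
  · rw [htsum]
    have : Φ ^ 3 + 2 * ((3/8)*π*Φ^2 - Φ^3/2) = 3/4 * (π * Φ^2) := by ring
    rw [this]
    have hne : π * Φ ^ 2 ≠ 0 := by positivity
    field_simp
end

section
/- For Φ ∈ (0, π/2] and b with 2Φ < |b| ≤ π, one has (pΦ/π)² + 2∑_{n=1}^{∞} (p sin(nΦ)/(πn))² cos(nb) = 0; i.e., the Fourier series of the self-convolution of the window function vanishes outside the support [−2Φ, 2Φ]. -/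
open Real

lemma cosSum {y : ℝ} (h0 : 0 ≤ y) (h1 : y ≤ 2 * π) :
    HasSum (fun n : ℕ => Real.cos (((n : ℝ) + 1) * y) / ((n : ℝ) + 1) ^ 2)
      (π ^ 2 / 6 - π * y / 2 + y ^ 2 / 4) := by
  have hπ : (0 : ℝ) < π := Real.pi_pos
  have hx : y / (2 * π) ∈ Set.Icc (0 : ℝ) 1 := by
    constructor
    · positivity
    · rw [div_le_one (by positivity)]; exact h1
  have H := hasSum_one_div_nat_pow_mul_cos (k := 1) one_ne_zero hx
  have heval : (Polynomial.map (algebraMap ℚ ℝ) (Polynomial.bernoulli (2 * 1))).eval (y / (2 * π))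
      = (y / (2 * π)) ^ 2 - (y / (2 * π)) + 1 / 6 := by
    norm_num
    simp [Polynomial.bernoulli, Finset.sum_range_succ, bernoulli_eq_bernoulli'_of_ne_one,
      bernoulli'_two, bernoulli_one, bernoulli_zero]
    ring
  rw [heval] at H
  have hfun : (fun n : ℕ => 1 / ((n : ℝ)) ^ 2 * Real.cos ((n : ℝ) * y))
      = fun n : ℕ => 1 / ((n : ℝ)) ^ (2 * 1) * Real.cos (2 * π * (n : ℝ) * (y / (2 * π))) := by
    funext n
    have : 2 * π * (n : ℝ) * (y / (2 * π)) = (n : ℝ) * y := by field_simp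
    rw [this]
  have hval : π ^ 2 / 6 - π * y / 2 + y ^ 2 / 4
      = (-1 : ℝ) ^ (1 + 1) * (2 * π) ^ (2 * 1) / 2 / ((2 * 1).factorial : ℝ)
        * ((y / (2 * π)) ^ 2 - y / (2 * π) + 1 / 6) := by
    norm_num [Nat.factorial]
    field_simp
    ring
  have H2 : HasSum (fun n : ℕ => 1 / ((n : ℝ)) ^ 2 * Real.cos ((n : ℝ) * y))
      (π ^ 2 / 6 - π * y / 2 + y ^ 2 / 4) := by rw [hfun, hval]; exact H
  have H3 := (hasSum_nat_add_iff' (f := fun n : ℕ => 1 / ((n : ℝ)) ^ 2 * Real.cos ((n : ℝ) * y)) 1).mpr H2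
  simp only [Finset.range_one, Finset.sum_singleton, Nat.cast_zero] at H3
  norm_num at H3
  convert H3 using 2 with n
  case e'_3 => rfl
  push_cast
  ring

/-- The Fourier series of the self-convolution of the window function vanishes outside
its support: for `Φ ∈ (0, π/2]` and `2Φ < |b| ≤ π`,
`(pΦ/π)² + 2∑_{n≥1} (p sin(nΦ)/(πn))² cos(nb) = 0`. -/
theorem window_self_convolution_vanishes
    (p Φ b : ℝ) (hp0 : 0 ≤ p) (hp1 : p ≤ 1) (hΦ0 : 0 < Φ) (hΦ : Φ ≤ π / 2)
    (hb1 : 2 * Φ < |b|) (hb2 : |b| ≤ π) :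
    (p * Φ / π) ^ 2
      + 2 * ∑' n : ℕ, (p * Real.sin ((n + 1) * Φ) / (π * ((n : ℝ) + 1))) ^ 2
          * Real.cos ((n + 1) * b) = 0 := by
  have hπ : (0 : ℝ) < π := Real.pi_pos
  set B := |b| with hB
  have hB0 : 0 ≤ B := abs_nonneg b
  have h1 := cosSum (y := B) hB0 (by linarith)
  have h2 := cosSum (y := B + 2 * Φ) (by linarith) (by linarith)
  have h3 := cosSum (y := B - 2 * Φ) (by linarith) (by linarith)
  have hc := (((h1.div_const 2).sub ((h2.div_const 4).add (h3.div_const 4))).mul_left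
    (p ^ 2 / π ^ 2))
  have hfun : (fun n : ℕ => p ^ 2 / π ^ 2 *
      (Real.cos (((n : ℝ) + 1) * B) / ((n : ℝ) + 1) ^ 2 / 2 -
        (Real.cos (((n : ℝ) + 1) * (B + 2 * Φ)) / ((n : ℝ) + 1) ^ 2 / 4 +
          Real.cos (((n : ℝ) + 1) * (B - 2 * Φ)) / ((n : ℝ) + 1) ^ 2 / 4)))
      = fun n : ℕ => (p * Real.sin ((n + 1) * Φ) / (π * ((n : ℝ) + 1))) ^ 2
          * Real.cos ((n + 1) * b) := by
    funext n
    set m : ℝ := (n : ℝ) + 1 with hm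
    have hm0 : (0 : ℝ) < m := by positivity
    have hcb : Real.cos (m * B) = Real.cos (m * b) := by
      rcases abs_cases b with ⟨h, _⟩ | ⟨h, _⟩
      · rw [hB, h]
      · rw [hB, h, show m * -b = -(m * b) by ring, Real.cos_neg]
    have e1 : Real.cos (m * (B + 2 * Φ))
        = Real.cos (m * B) * Real.cos (2 * (m * Φ)) - Real.sin (m * B) * Real.sin (2 * (m * Φ)) := by
      rw [show m * (B + 2 * Φ) = m * B + 2 * (m * Φ) by ring, Real.cos_add]
    have e2 : Real.cos (m * (B - 2 * Φ))
        = Real.cos (m * B) * Real.cos (2 * (m * Φ)) + Real.sin (m * B) * Real.sin (2 * (m * Φ)) := by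
      rw [show m * (B - 2 * Φ) = m * B - 2 * (m * Φ) by ring, Real.cos_sub]
    have e3 : Real.cos (2 * (m * Φ)) = 1 - 2 * Real.sin (m * Φ) ^ 2 := by
      have h := Real.sin_sq_add_cos_sq (m * Φ)
      rw [Real.cos_two_mul']; linarith
    rw [e1, e2, e3, ← hcb]
    field_simp
    ring
  rw [hfun] at hc
  rw [hc.tsum_eq]
  have hπ' : π ≠ 0 := ne_of_gt hπ
  field_simp
  ring
end
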